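/- The vector p_V = (4, √2 - i√6, -2 - 2i√3)ᵀ satisfies the real linear relation p_V = -(7/4)·p_B - (3/8)·B₁·p_B + (1/8)·B₁⁻¹·p_B in ℂ³. -/
import Mathlib


open Matrix Complex

noncomputable def A : Matrix (Fin 3) (Fin 3) ℂ :=
  !![1, -(Real.sqrt 2 : ℂ), (Real.sqrt 3 : ℂ) * Complex.I - 1;
     0, 1, (Real.sqrt 2 : ℂ);
     0, 0, 1]

noncomputable def B : Matrix (Fin 3) (Fin 3) ℂ :=
  !![1, 0, 0;
     (Real.sqrt 2 : ℂ), 1, 0;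
     -(Real.sqrt 3 : ℂ) * Complex.I - 1, -(Real.sqrt 2 : ℂ), 1]

noncomputable def B₁ : Matrix (Fin 3) (Fin 3) ℂ := A * B ^ 2 * A⁻¹

def pB : Fin 3 → ℂ := ![0, 0, 1]

noncomputable def herm (z w : Fin 3 → ℂ) : ℂ :=
  (starRingEnd ℂ) (z 0) * w 2 + (starRingEnd ℂ) (z 1) * w 1 + (starRingEnd ℂ) (z 2) * w 0

noncomputable def pV : Fin 3 → ℂ :=
  ![4, (Real.sqrt 2 : ℂ) - (Real.sqrt 6 : ℂ) * Complex.I,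
    -2 - 2 * (Real.sqrt 3 : ℂ) * Complex.I]

noncomputable abbrev r2 : ℂ := (Real.sqrt 2 : ℂ)
noncomputable abbrev r3 : ℂ := (Real.sqrt 3 : ℂ)

lemma hr2 : r2 ^ 2 = 2 := by
  rw [sq, ← Complex.ofReal_mul, Real.mul_self_sqrt (by norm_num)]; norm_num
lemma hr3 : r3 ^ 2 = 3 := by
  rw [sq, ← Complex.ofReal_mul, Real.mul_self_sqrt (by norm_num)]; norm_num
lemma hr6 : (Real.sqrt 6 : ℂ) = r2 * r3 := by
  rw [← Complex.ofReal_mul, show (6:ℝ) = 2*3 by norm_num, Real.sqrt_mul (by norm_num)]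

noncomputable def Ainv : Matrix (Fin 3) (Fin 3) ℂ :=
  !![1, r2, -1 - r3 * Complex.I;
     0, 1, -r2;
     0, 0, 1]

noncomputable def Binv : Matrix (Fin 3) (Fin 3) ℂ :=
  !![1, 0, 0;
     -r2, 1, 0;
     r3 * Complex.I - 1, r2, 1]

lemma hA_Ainv : A * Ainv = 1 := by
  ext i j
  fin_cases i <;> fin_cases j <;>
    simp [A, Ainv, Matrix.mul_apply, Fin.sum_univ_three, Matrix.one_apply,
      Matrix.vecHead, Matrix.vecTail, -mul_eq_zero] <;>
    (ring_nf; try simp only [hr2, hr3, Complex.I_sq]; try ring)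

lemma hAinv_A : Ainv * A = 1 := by
  ext i j
  fin_cases i <;> fin_cases j <;>
    simp [A, Ainv, Matrix.mul_apply, Fin.sum_univ_three, Matrix.one_apply,
      Matrix.vecHead, Matrix.vecTail, -mul_eq_zero] <;>
    (ring_nf; try simp only [hr2, hr3, Complex.I_sq]; try ring)

lemma hB_Binv : B * Binv = 1 := by
  ext i j
  fin_cases i <;> fin_cases j <;>
    simp [B, Binv, Matrix.mul_apply, Fin.sum_univ_three, Matrix.one_apply,
      Matrix.vecHead, Matrix.vecTail, -mul_eq_zero] <;>
    (ring_nf; try simp only [hr2, hr3, Complex.I_sq]; try ring)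

lemma hAinv : A⁻¹ = Ainv := Matrix.inv_eq_right_inv hA_Ainv

lemma hB1inv : B₁⁻¹ = A * (Binv * Binv) * Ainv := by
  apply Matrix.inv_eq_right_inv
  rw [B₁, hAinv, pow_two]
  have : A * (B * B) * Ainv * (A * (Binv * Binv) * Ainv)
      = A * (B * ((B * ((Ainv * A) * Binv)) * Binv)) * Ainv := by
    simp only [Matrix.mul_assoc]
  rw [this, hAinv_A, Matrix.one_mul, hB_Binv, Matrix.one_mul, hB_Binv,
    Matrix.mul_one, hA_Ainv]

lemma hv1 : Ainv.mulVec pB = ![-1 - r3 * Complex.I, -r2, 1] := by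
  funext i
  fin_cases i <;>
    simp [Ainv, pB, Matrix.mulVec, dotProduct, Fin.sum_univ_three,
      Matrix.vecHead, Matrix.vecTail]

lemma hv4 : B₁.mulVec pB
    = ![-16, 4 * (r2 * r3) * Complex.I, 3 + 6 * r3 * Complex.I] := by
  rw [B₁, hAinv, pow_two, ← Matrix.mulVec_mulVec, ← Matrix.mulVec_mulVec,
    ← Matrix.mulVec_mulVec, hv1]
  have h2 : B.mulVec ![-1 - r3 * Complex.I, -r2, 1]
      = ![-1 - r3 * Complex.I, -2*r2 - r2*r3*Complex.I, 1 + 2*r3*Complex.I] := by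
    funext i
    fin_cases i <;>
      simp [B, Matrix.mulVec, dotProduct, Fin.sum_univ_three,
        Matrix.vecHead, Matrix.vecTail, -mul_eq_zero] <;>
      (ring_nf; try simp only [hr2, hr3, Complex.I_sq]; try ring)
  rw [h2]
  have h3 : B.mulVec ![-1 - r3 * Complex.I, -2*r2 - r2*r3*Complex.I, 1 + 2*r3*Complex.I]
      = ![-1 - r3 * Complex.I, -3*r2 - 2*r2*r3*Complex.I, 3 + 6*r3*Complex.I] := by
    funext i
    fin_cases i <;>
      simp [B, Matrix.mulVec, dotProduct, Fin.sum_univ_three,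
        Matrix.vecHead, Matrix.vecTail, -mul_eq_zero] <;>
      (ring_nf; try simp only [hr2, hr3, Complex.I_sq]; try ring)
  rw [h3]
  funext i
  fin_cases i <;>
    simp [A, Matrix.mulVec, dotProduct, Fin.sum_univ_three,
      Matrix.vecHead, Matrix.vecTail, -mul_eq_zero] <;>
    (ring_nf; try simp only [hr2, hr3, Complex.I_sq]; try ring)

lemma hw4 : B₁⁻¹.mulVec pB
    = ![-16, 8*r2 + 4 * (r2 * r3) * Complex.I, 7 + 2 * r3 * Complex.I] := by
  rw [hB1inv, ← Matrix.mulVec_mulVec, ← Matrix.mulVec_mulVec,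
    ← Matrix.mulVec_mulVec, hv1]
  have h2 : Binv.mulVec ![-1 - r3 * Complex.I, -r2, 1]
      = ![-1 - r3 * Complex.I, r2*r3*Complex.I, 3] := by
    funext i
    fin_cases i <;>
      simp [Binv, Matrix.mulVec, dotProduct, Fin.sum_univ_three,
        Matrix.vecHead, Matrix.vecTail, -mul_eq_zero] <;>
      (ring_nf; try simp only [hr2, hr3, Complex.I_sq]; try ring)
  rw [h2]
  have h3 : Binv.mulVec ![-1 - r3 * Complex.I, r2*r3*Complex.I, 3]
      = ![-1 - r3 * Complex.I, r2 + 2*r2*r3*Complex.I, 7 + 2*r3*Complex.I] := by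
    funext i
    fin_cases i <;>
      simp [Binv, Matrix.mulVec, dotProduct, Fin.sum_univ_three,
        Matrix.vecHead, Matrix.vecTail, -mul_eq_zero] <;>
      (ring_nf; try simp only [hr2, hr3, Complex.I_sq]; try ring)
  rw [h3]
  funext i
  fin_cases i <;>
    simp [A, Matrix.mulVec, dotProduct, Fin.sum_univ_three,
      Matrix.vecHead, Matrix.vecTail, -mul_eq_zero] <;>
    (ring_nf; try simp only [hr2, hr3, Complex.I_sq]; try ring)

theorem stmt_17 :
    pV = (-(7/4) : ℝ) • pB + (-(3/8) : ℝ) • B₁.mulVec pB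
      + ((1/8) : ℝ) • B₁⁻¹.mulVec pB := by
  rw [hv4, hw4]
  funext i
  fin_cases i <;>
    simp [pV, pB, hr6, Matrix.vecHead, Matrix.vecTail, Complex.real_smul,
      -mul_eq_zero] <;>
    (push_cast; ring)
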